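/- Let n ≥ 1 and v ∈ ℝⁿ, let h : ℝⁿ → ℝⁿ be the componentwise absolute value (h(x))ᵢ = |xᵢ|, and let s be the softmax function s(x)ᵢ = exp(xᵢ)/∑_{j=1}^n exp(xⱼ). Then the inner product (s ∘ h)(t v) · h(v) = ∑_{i=1}^n (exp(t|vᵢ|)/∑_{j=1}^n exp(t|vⱼ|)) · |vᵢ| converges to ‖v‖_∞ = max_{1≤i≤n} |vᵢ| as t → ∞. -/
import Mathlib


open Filter

/-- For `n ≥ 1` and `v ∈ ℝⁿ`, with `h` the componentwise
absolute value and `s` the softmax function, the inner product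
`(s ∘ h)(t v) · h(v) = ∑ᵢ (exp(t|vᵢ|) / ∑ⱼ exp(t|vⱼ|)) * |vᵢ|` converges to
`‖v‖_∞ = maxᵢ |vᵢ|` as `t → ∞`. -/
theorem softmax_abs_tendsto_sup_norm
    (n : ℕ) (hn : 1 ≤ n) (v : Fin n → ℝ) :
    Tendsto
      (fun t : ℝ =>
        ∑ i : Fin n,
          (Real.exp (t * |v i|) / ∑ j : Fin n, Real.exp (t * |v j|)) * |v i|)
      atTop (nhds (⨆ i : Fin n, |v i|)) := by
  have hne : Nonempty (Fin n) := ⟨⟨0, hn⟩⟩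
  set M := ⨆ i : Fin n, |v i| with hMdef
  obtain ⟨i0, hi0⟩ := Finite.exists_max (fun i : Fin n => |v i|)
  have hle : ∀ i, |v i| ≤ M := fun i => le_ciSup (f := fun i : Fin n => |v i|) (Set.Finite.bddAbove (Set.finite_range _)) i
  have hMeq : M = |v i0| := le_antisymm (ciSup_le hi0) (hle i0)
  have hZ : ∀ t : ℝ, 0 < ∑ j : Fin n, Real.exp (t * |v j|) := fun t =>
    Finset.sum_pos (fun j _ => Real.exp_pos _) ⟨i0, Finset.mem_univ i0⟩
  have hZge : ∀ t : ℝ, Real.exp (t * M) ≤ ∑ j : Fin n, Real.exp (t * |v j|) := by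
    intro t
    rw [hMeq]
    exact Finset.single_le_sum (f := fun j : Fin n => Real.exp (t * |v j|))
      (fun j _ => (Real.exp_pos _).le) (Finset.mem_univ i0)
  have key : ∀ t : ℝ, ∑ i : Fin n, (Real.exp (t * |v i|) / ∑ j : Fin n, Real.exp (t * |v j|)) * |v i|
      = M - ∑ i : Fin n, (Real.exp (t * |v i|) / ∑ j : Fin n, Real.exp (t * |v j|)) * (M - |v i|) := by
    intro t
    have h1 : ∑ i : Fin n, (Real.exp (t * |v i|) / ∑ j : Fin n, Real.exp (t * |v j|)) = 1 := by
      rw [← Finset.sum_div, div_self (hZ t).ne']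
    have h2 : ∑ i : Fin n, (Real.exp (t * |v i|) / ∑ j : Fin n, Real.exp (t * |v j|)) * (M - |v i|)
        = M - ∑ i : Fin n, (Real.exp (t * |v i|) / ∑ j : Fin n, Real.exp (t * |v j|)) * |v i| := by
      simp_rw [mul_sub]
      rw [Finset.sum_sub_distrib, ← Finset.sum_mul, h1, one_mul]
    rw [h2]; ring
  simp only [key]
  have hR : Tendsto (fun t : ℝ => ∑ i : Fin n,
      (Real.exp (t * |v i|) / ∑ j : Fin n, Real.exp (t * |v j|)) * (M - |v i|)) atTop (nhds 0) := by
    have : (0 : ℝ) = ∑ _i : Fin n, (0 : ℝ) := by simp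
    rw [this]
    refine tendsto_finset_sum _ (fun i _ => ?_)
    rcases eq_or_lt_of_le (hle i) with hc | hc
    · simp [← hc]
    · apply squeeze_zero (fun t => mul_nonneg (div_nonneg (Real.exp_pos _).le (hZ t).le)
        (sub_nonneg.2 (hle i)))
        (g := fun t => Real.exp (t * (|v i| - M)) * (M - |v i|))
      · intro t
        have hdiv : Real.exp (t * |v i|) / ∑ j : Fin n, Real.exp (t * |v j|)
            ≤ Real.exp (t * (|v i| - M)) := by
          rw [mul_sub, Real.exp_sub]
          exact div_le_div_of_nonneg_left (Real.exp_pos _).le (Real.exp_pos _) (hZge t)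
        exact mul_le_mul_of_nonneg_right hdiv (sub_nonneg.2 (hle i))
      · have h1 : Tendsto (fun t : ℝ => t * (|v i| - M)) atTop atBot :=
          tendsto_id.atTop_mul_const_of_neg (by linarith)
        have h2 : Tendsto (fun t : ℝ => Real.exp (t * (|v i| - M))) atTop (nhds 0) :=
          Real.tendsto_exp_atBot.comp h1
        simpa using h2.mul_const (M - |v i|)
  have h3 : Tendsto (fun t : ℝ => M - ∑ i : Fin n,
      (Real.exp (t * |v i|) / ∑ j : Fin n, Real.exp (t * |v j|)) * (M - |v i|)) atTop (nhds (M - 0)) :=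
    Tendsto.sub tendsto_const_nhds hR
  simpa using h3
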